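/- Let (G_ω, r) be an increasing weighted tree with bipartition (U, V) of the underlying tree G, and let A(G_ω) = {v : there is a simple path v = v₁ → ⋯ → v_{2m}, m ≥ 1, with ω(v_{2m−1}v_{2m}) < μ(v_{2m})}. For any two vertices u, v ∈ V(G) \ A(G_ω) and any simple path u = v₁ → v₂ → ⋯ → v_{2m} = v with m ≥ 2, every edge v_{2i}v_{2i+1} for i ∈ {1,…,m−1} is a special edge of (G_ω, r). -/

import Mathlib

namespace SimpleGraph.Walk

variable {V : Type*} {G : SimpleGraph V} {x y : V}

lemma support_getD_eq_getVert (p : G.Walk x y) (d : V) {i : ℕ} (hi : i ≤ p.length) :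
    p.support.getD i d = p.getVert i := by
  induction p generalizing i with
  | nil =>
    have : i = 0 := by simpa using hi
    subst this
    simp
  | cons h q ih =>
    cases i with
    | zero => simp
    | succ i =>
      simp only [support_cons, List.getD_cons_succ, getVert_cons_succ]
      exact ih (by simpa using hi)

lemma IsPath.getVert_inj {p : G.Walk x y} (hp : p.IsPath) {i j : ℕ}
    (hi : i ≤ p.length) (hj : j ≤ p.length) (h : p.getVert i = p.getVert j) : i = j := by
  have hi' : i < p.support.length := by rw [length_support]; omega
  have hj' : j < p.support.length := by rw [length_support]; omega
  have h1 : p.support[i]'hi' = p.getVert i := by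
    rw [← List.getD_eq_getElem p.support x hi', support_getD_eq_getVert p x hi]
  have h2 : p.support[j]'hj' = p.getVert j := by
    rw [← List.getD_eq_getElem p.support x hj', support_getD_eq_getVert p x hj]
  exact (hp.support_nodup.getElem_inj_iff).mp (by rw [h1, h2, h])

lemma getVert_append_le (p : G.Walk x y) {z : V} (q : G.Walk y z) {j : ℕ} (hj : j ≤ p.length) :
    (p.append q).getVert j = p.getVert j := by
  rw [getVert_append]
  rcases lt_or_eq_of_le hj with h | rfl
  · rw [if_pos h]
  · rw [if_neg (lt_irrefl _), Nat.sub_self, getVert_zero, getVert_length]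

lemma getVert_append_right' (p : G.Walk x y) {z : V} (q : G.Walk y z) (j : ℕ) :
    (p.append q).getVert (p.length + j) = q.getVert j := by
  rw [getVert_append, if_neg (by omega)]
  congr 1
  omega

variable [DecidableEq V]

lemma getVert_takeUntil' {p : G.Walk x y} {u : V} (hu : u ∈ p.support) {j : ℕ}
    (hj : j ≤ (p.takeUntil u hu).length) :
    (p.takeUntil u hu).getVert j = p.getVert j := by
  conv_rhs => rw [← take_spec p hu]
  rw [getVert_append_le _ _ hj]

lemma length_takeUntil_eq {p : G.Walk x y} (hp : p.IsPath) {k : ℕ} {u : V}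
    (hu : u ∈ p.support) (hk : k ≤ p.length) (hgv : p.getVert k = u) :
    (p.takeUntil u hu).length = k := by
  have h1 : p.getVert (p.takeUntil u hu).length = u := by
    rw [← getVert_takeUntil hu (le_refl _), getVert_length]
  exact hp.getVert_inj (p.length_takeUntil_le hu) hk (by rw [h1, hgv])

lemma second_of_mem (htree : G.IsTree) {b c r : V} (q : G.Walk b r) (hq : q.IsPath)
    (hbc : G.Adj b c) (hc : c ∈ q.support) : q.getVert 1 = c ∧ 1 ≤ q.length := by
  have ht : q.takeUntil c hc = Walk.cons hbc Walk.nil :=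
    (htree.existsUnique_path b c).unique (hq.takeUntil hc)
      (by simp [cons_isPath_iff, hbc.ne])
  have hspec := take_spec q hc
  rw [ht, cons_append, nil_append] at hspec
  constructor
  · rw [← hspec, getVert_cons_succ, getVert_zero]
  · rw [← hspec, length_cons]; omega

lemma not_mem_of_ne_second (htree : G.IsTree) {a b r : V} (q : G.Walk b r) (hq : q.IsPath)
    (hab : G.Adj b a) (hne : q.getVert 1 ≠ a) : a ∉ q.support := fun h =>
  hne (second_of_mem htree q hq hab h).1

lemma exists_leaf_extension [Fintype V] [DecidableRel G.Adj] (htree : G.IsTree) {r : V} :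
    ∀ (k : ℕ) {a : V} (Q : G.Walk a r), Fintype.card V ≤ k + Q.length → Q.IsPath → ¬ Q.Nil →
      ∃ (ℓ : V) (q : G.Walk ℓ a), (q.append Q).IsPath ∧ G.degree ℓ = 1 := by
  intro k
  induction k with
  | zero =>
    intro a Q hk hQ _
    exact absurd hQ.length_lt (by omega)
  | succ k ih =>
    intro a Q hk hQ hnil
    by_cases hdeg : G.degree a = 1
    · exact ⟨a, Walk.nil, by simpa using hQ, hdeg⟩
    · have hadj1 : G.Adj a (Q.getVert 1) := Q.adj_snd hnil
      have hpos : 0 < G.degree a := (G.degree_pos_iff_exists_adj a).mpr ⟨_, hadj1⟩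
      have hcard : 1 < (G.neighborFinset a).card := by
        rw [card_neighborFinset_eq_degree]; omega
      obtain ⟨a', ha'mem, hne⟩ := Finset.exists_mem_ne hcard (Q.getVert 1)
      have haa' : G.Adj a a' := (mem_neighborFinset G a a').mp ha'mem
      have hnotmem : a' ∉ Q.support :=
        not_mem_of_ne_second htree Q hQ haa' (fun h => hne h.symm)
      have hQ' : (Walk.cons haa'.symm Q).IsPath := by
        rw [cons_isPath_iff]; exact ⟨hQ, hnotmem⟩
      obtain ⟨ℓ, q', hP, hd⟩ := ih (Walk.cons haa'.symm Q)
        (by rw [length_cons]; omega) hQ' not_nil_cons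
      refine ⟨ℓ, q'.append (Walk.cons haa'.symm Walk.nil), ?_, hd⟩
      rwa [← append_assoc, cons_append, nil_append]

end SimpleGraph.Walk





open MvPolynomial SimpleGraph

/-- The weight function `ω` on the edges of `G` is weakly increasing along every
simple path from a leaf to the root `r`. -/
def IsIncreasingRoot {n : ℕ} (G : SimpleGraph (Fin n)) [DecidableRel G.Adj]
    (ω : Sym2 (Fin n) → ℕ) (r : Fin n) : Prop :=
  ∀ v : Fin n, G.degree v = 1 → ∀ p : G.Walk v r, p.IsPath →
    ∀ i : ℕ, i + 2 < p.support.length →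
      ω s(p.support.getD i v, p.support.getD (i + 1) v) ≤
        ω s(p.support.getD (i + 1) v, p.support.getD (i + 2) v)

/-- The weight function `ω` is strictly increasing along every simple path from a leaf
to the root `r`. -/
def IsStrictlyIncreasingRoot {n : ℕ} (G : SimpleGraph (Fin n)) [DecidableRel G.Adj]
    (ω : Sym2 (Fin n) → ℕ) (r : Fin n) : Prop :=
  ∀ v : Fin n, G.degree v = 1 → ∀ p : G.Walk v r, p.IsPath →
    ∀ i : ℕ, i + 2 < p.support.length →
      ω s(p.support.getD i v, p.support.getD (i + 1) v) <
        ω s(p.support.getD (i + 1) v, p.support.getD (i + 2) v)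

/-- A vertex `v₂` is special: there is a simple path `v₁ → v₂ → v₃ → ⋯ → r` from a leaf `v₁`
of length at least 2 with `ω(v₁v₂) = ω(v₂v₃)`. -/
def IsSpecialVertex {n : ℕ} (G : SimpleGraph (Fin n)) [DecidableRel G.Adj]
    (ω : Sym2 (Fin n) → ℕ) (r : Fin n) (v₂ : Fin n) : Prop :=
  ∃ (v₁ : Fin n) (p : G.Walk v₁ r), G.degree v₁ = 1 ∧ p.IsPath ∧ 2 ≤ p.length ∧
    p.support.getD 1 v₁ = v₂ ∧
    ω s(p.support.getD 0 v₁, p.support.getD 1 v₁) =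
      ω s(p.support.getD 1 v₁, p.support.getD 2 v₁)

/-- An edge `uv` is special: there is a simple path `v₁ → u → v → ⋯ → r` (at least 3 vertices)
with `ω(v₁u) = ω(uv)`. -/
def IsSpecialEdge {n : ℕ} (G : SimpleGraph (Fin n))
    (ω : Sym2 (Fin n) → ℕ) (r : Fin n) (e : Sym2 (Fin n)) : Prop :=
  ∃ (v₁ : Fin n) (p : G.Walk v₁ r), p.IsPath ∧ 2 ≤ p.length ∧
    e = s(p.support.getD 1 v₁, p.support.getD 2 v₁) ∧
    ω s(p.support.getD 0 v₁, p.support.getD 1 v₁) =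
      ω s(p.support.getD 1 v₁, p.support.getD 2 v₁)

/-- `μ(v)`: the maximal weight of an edge at `v`. -/
def muWeight {n : ℕ} (G : SimpleGraph (Fin n)) [DecidableRel G.Adj]
    (ω : Sym2 (Fin n) → ℕ) (v : Fin n) : ℕ :=
  (G.neighborFinset v).sup fun u => ω s(u, v)

/-- The set `A(G_ω)` of vertices admitting a simple path `v = v₁ → ⋯ → v_{2m}` (`m ≥ 1`)
with `ω(v_{2m-1}v_{2m}) < μ(v_{2m})`. -/
def Aset {n : ℕ} (G : SimpleGraph (Fin n)) [DecidableRel G.Adj]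
    (ω : Sym2 (Fin n) → ℕ) : Set (Fin n) :=
  {v | ∃ (m : ℕ) (w : Fin n) (p : G.Walk v w), 1 ≤ m ∧ p.IsPath ∧
    p.support.length = 2 * m ∧
    ω s(p.support.getD (2 * m - 2) v, w) < muWeight G ω w}


section MainHelpers

variable {n : ℕ} {G : SimpleGraph (Fin n)} [DecidableRel G.Adj]

open SimpleGraph.Walk in
lemma mono_first {ω : Sym2 (Fin n) → ℕ} {r : Fin n}
    (htree : G.IsTree) (hroot : IsIncreasingRoot G ω r) {a : Fin n} (Q : G.Walk a r)
    (hQ : Q.IsPath) (h2 : 2 ≤ Q.length) :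
    ω s(Q.getVert 0, Q.getVert 1) ≤ ω s(Q.getVert 1, Q.getVert 2) := by
  have hnil : ¬ Q.Nil := by rw [nil_iff_length_eq]; omega
  obtain ⟨ℓ, q, hP, hdeg⟩ :=
    exists_leaf_extension htree (Fintype.card (Fin n)) Q (by omega) hQ hnil
  have key := hroot ℓ hdeg (q.append Q) hP q.length
    (by rw [length_support, length_append]; omega)
  have e0 : (q.append Q).support.getD q.length ℓ = Q.getVert 0 := by
    rw [support_getD_eq_getVert _ _ (by rw [length_append]; omega)]
    exact getVert_append_right' q Q 0
  have e1 : (q.append Q).support.getD (q.length + 1) ℓ = Q.getVert 1 := by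
    rw [support_getD_eq_getVert _ _ (by rw [length_append]; omega)]
    exact getVert_append_right' q Q 1
  have e2 : (q.append Q).support.getD (q.length + 2) ℓ = Q.getVert 2 := by
    rw [support_getD_eq_getVert _ _ (by rw [length_append]; omega)]
    exact getVert_append_right' q Q 2
  rwa [e0, e1, e2] at key

end MainHelpers

/-- **Lemma.** Let `(G_ω, r)` be an increasing weighted tree and `u, v ∉ A(G_ω)`. Then for
every simple path `u = v₁ → v₂ → ⋯ → v_{2m} = v` with `m ≥ 2`, every edge `v_{2i}v_{2i+1}`
for `i ∈ {1,…,m-1}` is a special edge of `(G_ω, r)`. -/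
theorem special_edges_on_path_outside_Aset {n : ℕ} (G : SimpleGraph (Fin n))
    [DecidableRel G.Adj] (ω : Sym2 (Fin n) → ℕ) (r : Fin n)
    (htree : G.IsTree) (hpos : ∀ e ∈ G.edgeSet, 1 ≤ ω e)
    (hroot : IsIncreasingRoot G ω r)
    (u v : Fin n) (hu : u ∉ Aset G ω) (hv : v ∉ Aset G ω)
    (m : ℕ) (hm : 2 ≤ m) (p : G.Walk u v)
    (hpath : p.IsPath) (hlen : p.support.length = 2 * m) :
    ∀ i : ℕ, 1 ≤ i → i ≤ m - 1 →
      IsSpecialEdge G ω r s(p.support.getD (2 * i - 1) u, p.support.getD (2 * i) u) := by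
  intro i hi1 hi2
  obtain ⟨j, rfl⟩ : ∃ j, i = j + 1 := ⟨i - 1, by omega⟩
  obtain ⟨k, rfl⟩ : ∃ k, m = j + k + 2 := ⟨m - j - 2, by omega⟩
  have hplen : p.length = 2*j + 2*k + 3 := by
    have := p.length_support; omega
  simp only [Aset, Set.mem_setOf_eq, not_exists, not_and, not_lt] at hu hv
  -- prefix path u → b
  have hbmem : p.getVert (2*j+1) ∈ p.support :=
    Walk.mem_support_iff_exists_getVert.mpr ⟨2*j+1, rfl, by omega⟩
  have htlen : (p.takeUntil _ hbmem).length = 2*j+1 :=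
    Walk.length_takeUntil_eq hpath hbmem (by omega) rfl
  have h1 := hu (j+1) (p.getVert (2*j+1)) (p.takeUntil _ hbmem) (by omega)
    (hpath.takeUntil hbmem) (by rw [Walk.length_support, htlen]; ring)
  have ht1 : (p.takeUntil _ hbmem).support.getD (2*(j+1)-2) u = p.getVert (2*j) := by
    rw [show 2*(j+1)-2 = 2*j from by omega,
      Walk.support_getD_eq_getVert _ _ (by omega),
      Walk.getVert_takeUntil hbmem (by omega)]
  rw [ht1] at h1
  -- suffix path v → c  (as a prefix of the reversed path)
  have hcmem : p.getVert (2*j+2) ∈ p.reverse.support :=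
    Walk.mem_support_iff_exists_getVert.mpr
      ⟨2*k+1, by rw [Walk.getVert_reverse]; congr 1; omega, by rw [Walk.length_reverse]; omega⟩
  have ht'len : (p.reverse.takeUntil _ hcmem).length = 2*k+1 :=
    Walk.length_takeUntil_eq hpath.reverse hcmem (by rw [Walk.length_reverse]; omega)
      (by rw [Walk.getVert_reverse]; congr 1; omega)
  have h2 := hv (k+1) (p.getVert (2*j+2)) (p.reverse.takeUntil _ hcmem) (by omega)
    (hpath.reverse.takeUntil hcmem) (by rw [Walk.length_support, ht'len]; ring)
  have ht2 : (p.reverse.takeUntil _ hcmem).support.getD (2*(k+1)-2) v = p.getVert (2*j+3) := by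
    rw [show 2*(k+1)-2 = 2*k from by omega,
      Walk.support_getD_eq_getVert _ _ (by omega),
      Walk.getVert_takeUntil hcmem (by omega), Walk.getVert_reverse]
    congr 1; omega
  rw [ht2] at h2
  -- adjacencies along p
  have hab : G.Adj (p.getVert (2*j)) (p.getVert (2*j+1)) := p.adj_getVert_succ (by omega)
  have hbc : G.Adj (p.getVert (2*j+1)) (p.getVert (2*j+2)) := by
    have := p.adj_getVert_succ (i := 2*j+1) (by omega)
    simpa using this
  have hca' : G.Adj (p.getVert (2*j+2)) (p.getVert (2*j+3)) := by
    have := p.adj_getVert_succ (i := 2*j+2) (by omega)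
    simpa using this
  -- μ bounds
  have hmub : ω s(p.getVert (2*j+2), p.getVert (2*j+1)) ≤ muWeight G ω (p.getVert (2*j+1)) :=
    Finset.le_sup (f := fun x => ω s(x, p.getVert (2*j+1)))
      ((G.mem_neighborFinset _ _).mpr hbc)
  have hmuc : ω s(p.getVert (2*j+1), p.getVert (2*j+2)) ≤ muWeight G ω (p.getVert (2*j+2)) :=
    Finset.le_sup (f := fun x => ω s(x, p.getVert (2*j+2)))
      ((G.mem_neighborFinset _ _).mpr hbc.symm)
  -- rewrite the goal in terms of getVert
  have g1 : p.support.getD (2*(j+1)-1) u = p.getVert (2*j+1) := by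
    rw [show 2*(j+1)-1 = 2*j+1 from by omega, Walk.support_getD_eq_getVert _ _ (by omega)]
  have g2 : p.support.getD (2*(j+1)) u = p.getVert (2*j+2) := by
    rw [show 2*(j+1) = 2*j+2 from by omega, Walk.support_getD_eq_getVert _ _ (by omega)]
  rw [g1, g2]
  -- the tree path from b to the root
  obtain ⟨qb, hqb, -⟩ := htree.existsUnique_path (p.getVert (2*j+1)) r
  by_cases hcase : p.getVert (2*j+2) ∈ qb.support
  · -- Case A : the root is on the c-side; use the path a → b → c → ⋯ → r
    obtain ⟨hsec, hqblen⟩ := Walk.second_of_mem htree qb hqb hbc hcase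
    have hanotin : p.getVert (2*j) ∉ qb.support := by
      refine Walk.not_mem_of_ne_second htree qb hqb hab.symm ?_
      rw [hsec]
      intro h
      have := hpath.getVert_inj (i := 2*j+2) (j := 2*j) (by omega) (by omega) h
      omega
    have hQpath : (Walk.cons hab qb).IsPath := by
      rw [Walk.cons_isPath_iff]; exact ⟨hqb, hanotin⟩
    have hQlen : 2 ≤ (Walk.cons hab qb).length := by rw [Walk.length_cons]; omega
    have hQ0 : (Walk.cons hab qb).getVert 0 = p.getVert (2*j) := rfl
    have hQ1 : (Walk.cons hab qb).getVert 1 = p.getVert (2*j+1) := by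
      simp [Walk.getVert_cons_succ]
    have hQ2 : (Walk.cons hab qb).getVert 2 = p.getVert (2*j+2) := by
      simpa [Walk.getVert_cons_succ] using hsec
    have hmono := mono_first htree hroot (Walk.cons hab qb) hQpath hQlen
    rw [hQ0, hQ1, hQ2] at hmono
    have hle2 : ω s(p.getVert (2*j+1), p.getVert (2*j+2)) ≤
        ω s(p.getVert (2*j), p.getVert (2*j+1)) := by
      rw [Sym2.eq_swap]; exact le_trans hmub h1
    refine ⟨p.getVert (2*j), Walk.cons hab qb, hQpath, hQlen, ?_, ?_⟩
    · rw [Walk.support_getD_eq_getVert _ _ (by omega),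
        Walk.support_getD_eq_getVert _ _ (by omega), hQ1, hQ2]
    · rw [Walk.support_getD_eq_getVert _ _ (by omega),
        Walk.support_getD_eq_getVert _ _ (by omega),
        Walk.support_getD_eq_getVert _ _ (by omega), hQ0, hQ1, hQ2]
      exact le_antisymm hmono hle2
  · -- Case B : the root is on the b-side; use the path a' → c → b → ⋯ → r
    have hqc : (Walk.cons hbc.symm qb).IsPath := by
      rw [Walk.cons_isPath_iff]; exact ⟨hqb, hcase⟩
    have hqc1 : (Walk.cons hbc.symm qb).getVert 1 = p.getVert (2*j+1) := by
      simp [Walk.getVert_cons_succ]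
    have ha'notin : p.getVert (2*j+3) ∉ (Walk.cons hbc.symm qb).support := by
      refine Walk.not_mem_of_ne_second htree _ hqc hca' ?_
      rw [hqc1]
      intro h
      have := hpath.getVert_inj (i := 2*j+1) (j := 2*j+3) (by omega) (by omega) h
      omega
    have hQpath : (Walk.cons hca'.symm (Walk.cons hbc.symm qb)).IsPath := by
      rw [Walk.cons_isPath_iff]; exact ⟨hqc, ha'notin⟩
    have hQlen : 2 ≤ (Walk.cons hca'.symm (Walk.cons hbc.symm qb)).length := by
      rw [Walk.length_cons, Walk.length_cons]; omega
    have hQ0 : (Walk.cons hca'.symm (Walk.cons hbc.symm qb)).getVert 0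
        = p.getVert (2*j+3) := rfl
    have hQ1 : (Walk.cons hca'.symm (Walk.cons hbc.symm qb)).getVert 1
        = p.getVert (2*j+2) := by
      simp [Walk.getVert_cons_succ]
    have hQ2 : (Walk.cons hca'.symm (Walk.cons hbc.symm qb)).getVert 2
        = p.getVert (2*j+1) := by
      simp [Walk.getVert_cons_succ]
    have hmono := mono_first htree hroot _ hQpath hQlen
    rw [hQ0, hQ1, hQ2] at hmono
    have hle2 : ω s(p.getVert (2*j+2), p.getVert (2*j+1)) ≤
        ω s(p.getVert (2*j+3), p.getVert (2*j+2)) := by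
      rw [Sym2.eq_swap]; exact le_trans hmuc h2
    refine ⟨p.getVert (2*j+3), Walk.cons hca'.symm (Walk.cons hbc.symm qb),
      hQpath, hQlen, ?_, ?_⟩
    · rw [Walk.support_getD_eq_getVert _ _ (by omega),
        Walk.support_getD_eq_getVert _ _ (by omega), hQ1, hQ2]
      exact Sym2.eq_swap
    · rw [Walk.support_getD_eq_getVert _ _ (by omega),
        Walk.support_getD_eq_getVert _ _ (by omega),
        Walk.support_getD_eq_getVert _ _ (by omega), hQ0, hQ1, hQ2]
      exact le_antisymm hmono hle2
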